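/- Let n ≥ 5 and let L = F1(α_4,…,α_n,θ) be an n-dimensional complex filiform Leibniz algebra of the first family. For any pre-derivation P of L, writing P(e_1) = Σ_{t=1}^n a_t e_t and P(e_2) = Σ_{t=1}^n b_t e_t in the basis e_1,…,e_n, one has b_1 + b_2 = a_1 + a_2 and b_t = a_t for all 3 ≤ t ≤ n−2; moreover P(e_4) = (3a_1 + a_2) e_4 + Σ_{t=5}^{n} (a_{t−2} + 2 a_2 α_{t−1}) e_t. -/

import Mathlib

open Finset

/-- The basis vector `e_i` (1-indexed) of `ℂ^n`; zero if `i` is out of range. -/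
noncomputable def E (n : ℕ) (i : ℕ) : Fin n → ℂ :=
  if h : 1 ≤ i ∧ i ≤ n then Pi.single (⟨i - 1, by omega⟩ : Fin n) 1 else 0

/-- The bilinear bracket on `ℂ^n` determined by the products `m i j` of the
(1-indexed) basis vectors `e_i`, `e_j`. -/
noncomputable def bracketOf (n : ℕ) (m : ℕ → ℕ → Fin n → ℂ)
    (x y : Fin n → ℂ) : Fin n → ℂ :=
  ∑ i : Fin n, ∑ j : Fin n, (x i * y j) • m (i.1 + 1) (j.1 + 1)

/-- `P` is a pre-derivation of the algebra with bracket `br`. -/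
def IsPreDeriv (n : ℕ) (br : (Fin n → ℂ) → (Fin n → ℂ) → Fin n → ℂ)
    (P : Module.End ℂ (Fin n → ℂ)) : Prop :=
  ∀ x y z, P (br (br x y) z) =
    br (br (P x) y) z + br (br x (P y)) z + br (br x y) (P z)

/-- Multiplication table of the first family `F1(α₄,…,αₙ,θ)` of filiform Leibniz
algebras: `[e₁,e₁]=e₃`; `[eᵢ,e₁]=e_{i+1}` for `2 ≤ i ≤ n-1`;
`[e₁,e₂]=∑_{t=4}^{n-1} α_t e_t + θ eₙ`; `[eⱼ,e₂]=∑_{t=j+2}^{n} α_{t-j+2} e_t`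
for `2 ≤ j ≤ n-2`; all other products zero. -/
noncomputable def F1mul (n : ℕ) (α : ℕ → ℂ) (θ : ℂ) (i j : ℕ) : Fin n → ℂ :=
  if i = 1 ∧ j = 1 then E n 3
  else if 2 ≤ i ∧ i ≤ n - 1 ∧ j = 1 then E n (i + 1)
  else if i = 1 ∧ j = 2 then (∑ t ∈ Icc 4 (n - 1), α t • E n t) + θ • E n n
  else if 2 ≤ i ∧ i ≤ n - 2 ∧ j = 2 then ∑ t ∈ Icc (i + 2) n, α (t - i + 2) • E n t
  else 0

lemma E_apply (n i : ℕ) (k : Fin n) : E n i k = if (k:ℕ) + 1 = i then 1 else 0 := by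
  unfold E
  split
  · rename_i h
    rw [Pi.single_apply]
    by_cases hc : (k:ℕ) + 1 = i <;> simp [Fin.ext_iff, hc] <;> omega
  · rename_i h
    simp only [Pi.zero_apply, eq_comm]
    rw [if_neg]; omega

lemma br_apply (n : ℕ) (m : ℕ → ℕ → Fin n → ℂ) (x y : Fin n → ℂ) (k : Fin n) :
    bracketOf n m x y k = ∑ i : Fin n, ∑ j : Fin n, x i * y j * m (i.1+1) (j.1+1) k := by
  simp [bracketOf, Finset.sum_apply, smul_eq_mul]

lemma sum_Icc_apply (n p q : ℕ) (f : ℕ → ℂ) (k : Fin n) :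
    (∑ t ∈ Icc p q, f t • E n t) k = if (k:ℕ)+1 ∈ Icc p q then f ((k:ℕ)+1) else 0 := by
  rw [Finset.sum_apply]
  simp only [Pi.smul_apply, E_apply, smul_eq_mul, mul_ite, mul_one, mul_zero]
  rw [Finset.sum_ite_eq (Icc p q) ((k:ℕ)+1) f]

lemma br_add_left (n : ℕ) (m : ℕ → ℕ → Fin n → ℂ) (x x' y : Fin n → ℂ) :
    bracketOf n m (x + x') y = bracketOf n m x y + bracketOf n m x' y := by
  funext k
  simp [br_apply, add_mul, Finset.sum_add_distrib]

lemma br_smul_left (n : ℕ) (m : ℕ → ℕ → Fin n → ℂ) (c : ℂ) (x y : Fin n → ℂ) :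
    bracketOf n m (c • x) y = c • bracketOf n m x y := by
  funext k
  simp [br_apply, Finset.mul_sum, mul_assoc]

lemma br_zero_left (n : ℕ) (m : ℕ → ℕ → Fin n → ℂ) (y : Fin n → ℂ) :
    bracketOf n m 0 y = 0 := by
  funext k
  simp [br_apply]

lemma br_add_right (n : ℕ) (m : ℕ → ℕ → Fin n → ℂ) (x y y' : Fin n → ℂ) :
    bracketOf n m x (y + y') = bracketOf n m x y + bracketOf n m x y' := by
  funext k
  simp [br_apply, mul_add, add_mul, Finset.sum_add_distrib]

lemma br_smul_right (n : ℕ) (m : ℕ → ℕ → Fin n → ℂ) (c : ℂ) (x y : Fin n → ℂ) :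
    bracketOf n m x (c • y) = c • bracketOf n m x y := by
  funext k
  simp only [br_apply, Pi.smul_apply, smul_eq_mul, Finset.mul_sum]
  refine Finset.sum_congr rfl fun i _ => Finset.sum_congr rfl fun j _ => by ring

lemma br_sum_left (n : ℕ) (m : ℕ → ℕ → Fin n → ℂ) (s : Finset ℕ) (c : ℕ → ℂ)
    (g : ℕ → Fin n → ℂ) (y : Fin n → ℂ) :
    bracketOf n m (∑ t ∈ s, c t • g t) y = ∑ t ∈ s, c t • bracketOf n m (g t) y := by
  classical
  induction s using Finset.induction_on with
  | empty => simp [br_zero_left]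
  | insert _ _ h ih =>
    rw [Finset.sum_insert h, br_add_left, br_smul_left, ih, Finset.sum_insert h]

lemma br_sum_right (n : ℕ) (m : ℕ → ℕ → Fin n → ℂ) (s : Finset ℕ) (c : ℕ → ℂ)
    (g : ℕ → Fin n → ℂ) (x : Fin n → ℂ) :
    bracketOf n m x (∑ t ∈ s, c t • g t) = ∑ t ∈ s, c t • bracketOf n m x (g t) := by
  classical
  induction s using Finset.induction_on with
  | empty =>
    simp only [Finset.sum_empty]
    funext k; simp [br_apply]
  | insert _ _ h ih =>
    rw [Finset.sum_insert h, br_add_right, br_smul_right, ih, Finset.sum_insert h]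

lemma br_single (n : ℕ) (m : ℕ → ℕ → Fin n → ℂ) {p q : ℕ} (hp1 : 1 ≤ p) (hpn : p ≤ n)
    (hq1 : 1 ≤ q) (hqn : q ≤ n) :
    bracketOf n m (E n p) (E n q) = m p q := by
  funext k
  rw [br_apply]
  rw [Finset.sum_eq_single (⟨p-1, by omega⟩ : Fin n)]
  · rw [Finset.sum_eq_single (⟨q-1, by omega⟩ : Fin n)]
    · have h1 : E n p ⟨p-1, by omega⟩ = 1 := by
        rw [E_apply]; simp only [Fin.val_mk]; rw [if_pos (by omega)]
      have h2 : E n q ⟨q-1, by omega⟩ = 1 := by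
        rw [E_apply]; simp only [Fin.val_mk]; rw [if_pos (by omega)]
      have h3 : (p-1) + 1 = p := by omega
      have h4 : (q-1) + 1 = q := by omega
      rw [h1, h2, h3, h4]; ring
    · intro j _ hj
      have : E n q j = 0 := by
        rw [E_apply, if_neg (by simp [Fin.ext_iff] at hj; omega)]
      rw [this]; ring
    · simp
  · intro i _ hi
    rw [Finset.sum_eq_zero]
    intro j _
    have : E n p i = 0 := by
      rw [E_apply, if_neg (by simp [Fin.ext_iff] at hi; omega)]
    rw [this]; ring
  · simp

section
variable (n : ℕ) (α : ℕ → ℂ) (θ : ℂ)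

lemma F1_11 : F1mul n α θ 1 1 = E n 3 := by
  unfold F1mul; rw [if_pos ⟨rfl, rfl⟩]

lemma F1_p1 {p : ℕ} (h2 : 2 ≤ p) (h3 : p ≤ n - 1) : F1mul n α θ p 1 = E n (p + 1) := by
  unfold F1mul; rw [if_neg (by omega), if_pos ⟨h2, h3, rfl⟩]

lemma F1_n1 (hn : 2 ≤ n) : F1mul n α θ n 1 = 0 := by
  unfold F1mul
  rw [if_neg (by omega), if_neg (by omega), if_neg (by omega), if_neg (by omega)]

lemma F1_12 : F1mul n α θ 1 2 = (∑ t ∈ Icc 4 (n - 1), α t • E n t) + θ • E n n := by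
  unfold F1mul; rw [if_neg (by omega), if_neg (by omega), if_pos ⟨rfl, rfl⟩]

lemma F1_22 (hn : 4 ≤ n) : F1mul n α θ 2 2 = ∑ t ∈ Icc 4 n, α t • E n t := by
  unfold F1mul
  rw [if_neg (by omega), if_neg (by omega), if_neg (by omega),
    if_pos ⟨le_refl 2, by omega, rfl⟩]
  exact Finset.sum_congr rfl fun t ht => by
    rw [Finset.mem_Icc] at ht
    congr 2
    omega

lemma F1_32 (hn : 5 ≤ n) : F1mul n α θ 3 2 = ∑ t ∈ Icc 5 n, α (t - 1) • E n t := by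
  unfold F1mul
  rw [if_neg (by omega), if_neg (by omega), if_neg (by omega),
    if_pos ⟨by omega, by omega, rfl⟩]
  exact Finset.sum_congr rfl fun t ht => by
    rw [Finset.mem_Icc] at ht
    congr 2
    omega

lemma F1_r0 (p q : ℕ) (h : 3 ≤ q) : F1mul n α θ p q = 0 := by
  unfold F1mul
  rw [if_neg (by omega), if_neg (by omega), if_neg (by omega), if_neg (by omega)]

lemma sum_shift_E (hn : 1 ≤ n) (p : ℕ) (d : ℕ → ℂ) :
    ∑ t ∈ Icc p (n-1), d t • E n (t+1) = ∑ t ∈ Icc (p+1) n, d (t-1) • E n t := by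
  have hmap : Icc (p+1) n = Finset.map (addRightEmbedding 1) (Icc p (n-1)) := by
    rw [Finset.map_add_right_Icc]
    congr 1
    omega
  rw [hmap, Finset.sum_map]
  exact Finset.sum_congr rfl fun t ht => by
    simp only [addRightEmbedding_apply, Nat.add_sub_cancel]

lemma sum_m_t1 (hn : 5 ≤ n) {p : ℕ} (hp3 : 3 ≤ p) (hpn : p ≤ n - 1) (d : ℕ → ℂ) :
    ∑ t ∈ Icc p n, d t • F1mul n α θ t 1 = ∑ t ∈ Icc (p+1) n, d (t-1) • E n t := by
  have hsplit : Icc p n = insert n (Icc p (n-1)) := by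
    ext x; simp only [Finset.mem_insert, Finset.mem_Icc]; omega
  rw [hsplit, Finset.sum_insert (by simp only [Finset.mem_Icc]; omega)]
  rw [F1_n1 n α θ (by omega), smul_zero, zero_add]
  have hc : ∑ t ∈ Icc p (n-1), d t • F1mul n α θ t 1
      = ∑ t ∈ Icc p (n-1), d t • E n (t+1) :=
    Finset.sum_congr rfl fun t ht => by
      rw [Finset.mem_Icc] at ht
      rw [F1_p1 n α θ (by omega) (by omega)]
  rw [hc, sum_shift_E n (by omega)]
lemma Icc1n_split (hn : 5 ≤ n) : Icc 1 n = insert 1 (insert 2 (Icc 3 n)) := by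
  ext x; simp only [Finset.mem_insert, Finset.mem_Icc]; omega

lemma brX1 (hn : 5 ≤ n) (c : ℕ → ℂ) :
    bracketOf n (F1mul n α θ) (∑ t ∈ Icc 1 n, c t • E n t) (E n 1)
      = (c 1 + c 2) • E n 3 + ∑ t ∈ Icc 4 n, c (t-1) • E n t := by
  rw [br_sum_left]
  have h1 : ∑ t ∈ Icc 1 n, c t • bracketOf n (F1mul n α θ) (E n t) (E n 1)
      = ∑ t ∈ Icc 1 n, c t • F1mul n α θ t 1 :=
    Finset.sum_congr rfl fun t ht => by
      rw [Finset.mem_Icc] at ht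
      rw [br_single n _ ht.1 ht.2 (by omega) (by omega)]
  rw [h1, Icc1n_split n hn,
    Finset.sum_insert (by simp only [Finset.mem_insert, Finset.mem_Icc]; omega),
    Finset.sum_insert (by simp only [Finset.mem_Icc]; omega)]
  rw [F1_11, F1_p1 n α θ (le_refl 2) (by omega),
    sum_m_t1 n α θ hn (le_refl 3) (by omega)]
  show c 1 • E n 3 + (c 2 • E n (2+1) + ∑ t ∈ Icc (3+1) n, c (t-1) • E n t) = _
  norm_num
  module

lemma T1_eq (hn : 5 ≤ n) (c : ℕ → ℂ) :
    bracketOf n (F1mul n α θ)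
        (bracketOf n (F1mul n α θ) (∑ t ∈ Icc 1 n, c t • E n t) (E n 1)) (E n 1)
      = (c 1 + c 2) • E n 4 + ∑ t ∈ Icc 5 n, c (t-2) • E n t := by
  rw [brX1 n α θ hn c, br_add_left, br_smul_left, br_sum_left]
  rw [br_single n _ (by omega) (by omega) (by omega) (by omega)]
  rw [F1_p1 n α θ (by omega) (by omega)]
  have h2 : ∑ t ∈ Icc 4 n, c (t-1) • bracketOf n (F1mul n α θ) (E n t) (E n 1)
      = ∑ t ∈ Icc 4 n, c (t-1) • F1mul n α θ t 1 :=
    Finset.sum_congr rfl fun t ht => by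
      rw [Finset.mem_Icc] at ht
      rw [br_single n _ (by omega) (by omega) (by omega) (by omega)]
  rw [h2, sum_m_t1 n α θ hn (by omega) (by omega)]
  have h3 : ∑ t ∈ Icc (4+1) n, c (t-1-1) • E n t = ∑ t ∈ Icc 5 n, c (t-2) • E n t :=
    Finset.sum_congr rfl fun t ht => by
      have : t - 1 - 1 = t - 2 := by omega
      rw [this]
  rw [h3]

lemma br_pX (hn : 5 ≤ n) {p : ℕ} (hp1 : 1 ≤ p) (hpn : p ≤ n) (c : ℕ → ℂ) :
    bracketOf n (F1mul n α θ) (E n p) (∑ t ∈ Icc 1 n, c t • E n t)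
      = c 1 • F1mul n α θ p 1 + c 2 • F1mul n α θ p 2 := by
  rw [br_sum_right]
  have h1 : ∑ t ∈ Icc 1 n, c t • bracketOf n (F1mul n α θ) (E n p) (E n t)
      = ∑ t ∈ Icc 1 n, c t • F1mul n α θ p t :=
    Finset.sum_congr rfl fun t ht => by
      rw [Finset.mem_Icc] at ht
      rw [br_single n _ hp1 hpn ht.1 ht.2]
  rw [h1, Icc1n_split n hn,
    Finset.sum_insert (by simp only [Finset.mem_insert, Finset.mem_Icc]; omega),
    Finset.sum_insert (by simp only [Finset.mem_Icc]; omega)]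
  rw [Finset.sum_eq_zero fun t ht => by
    rw [Finset.mem_Icc] at ht
    rw [F1_r0 n α θ p t (by omega), smul_zero]]
  rw [add_zero]

lemma T3_eq (hn : 5 ≤ n) (c : ℕ → ℂ) :
    bracketOf n (F1mul n α θ) (E n 3) (∑ t ∈ Icc 1 n, c t • E n t)
      = c 1 • E n 4 + c 2 • ∑ t ∈ Icc 5 n, α (t-1) • E n t := by
  rw [br_pX n α θ hn (by omega) (by omega), F1_p1 n α θ (by omega) (by omega),
    F1_32 n α θ hn]

lemma T2_eq (hn : 5 ≤ n) (c : ℕ → ℂ) :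
    bracketOf n (F1mul n α θ)
        (bracketOf n (F1mul n α θ) (E n 1) (∑ t ∈ Icc 1 n, c t • E n t)) (E n 1)
      = c 1 • E n 4 + c 2 • ∑ t ∈ Icc 5 n, α (t-1) • E n t := by
  rw [br_pX n α θ hn (by omega) (by omega), F1_11, F1_12]
  rw [br_add_left, br_smul_left, br_smul_left, br_add_left, br_smul_left]
  rw [br_single n _ (by omega) (by omega) (by omega) (by omega)]
  rw [F1_p1 n α θ (by omega) (by omega)]
  rw [br_sum_left]
  have h1 : ∑ t ∈ Icc 4 (n-1), α t • bracketOf n (F1mul n α θ) (E n t) (E n 1)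
      = ∑ t ∈ Icc 4 (n-1), α t • E n (t+1) :=
    Finset.sum_congr rfl fun t ht => by
      rw [Finset.mem_Icc] at ht
      rw [br_single n _ (by omega) (by omega) (by omega) (by omega),
        F1_p1 n α θ (by omega) (by omega)]
  rw [h1, sum_shift_E n (by omega)]
  rw [br_single n _ (by omega) (by omega) (by omega) (by omega), F1_n1 n α θ (by omega)]
  norm_num

lemma T2'_eq (hn : 5 ≤ n) (c : ℕ → ℂ) :
    bracketOf n (F1mul n α θ)
        (bracketOf n (F1mul n α θ) (E n 2) (∑ t ∈ Icc 1 n, c t • E n t)) (E n 1)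
      = c 1 • E n 4 + c 2 • ∑ t ∈ Icc 5 n, α (t-1) • E n t := by
  rw [br_pX n α θ hn (by omega) (by omega), F1_p1 n α θ (by omega) (by omega),
    F1_22 n α θ (by omega)]
  rw [br_add_left, br_smul_left, br_smul_left]
  rw [br_single n _ (by omega) (by omega) (by omega) (by omega)]
  rw [F1_p1 n α θ (by omega) (by omega)]
  rw [br_sum_left]
  have h1 : ∑ t ∈ Icc 4 n, α t • bracketOf n (F1mul n α θ) (E n t) (E n 1)
      = ∑ t ∈ Icc 4 n, α t • F1mul n α θ t 1 :=
    Finset.sum_congr rfl fun t ht => by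
      rw [Finset.mem_Icc] at ht
      rw [br_single n _ (by omega) (by omega) (by omega) (by omega)]
  rw [h1, sum_m_t1 n α θ hn (by omega) (by omega)]

end
/-- For any pre-derivation `P` of a first-family filiform Leibniz algebra,
writing `P(e₁) = ∑ aₜ eₜ` and `P(e₂) = ∑ bₜ eₜ`, one has `b₁ + b₂ = a₁ + a₂`,
`bₜ = aₜ` for `3 ≤ t ≤ n-2`, and
`P(e₄) = (3a₁+a₂)e₄ + ∑_{t=5}^n (a_{t-2} + 2a₂α_{t-1}) eₜ`. -/
theorem stmt_11 (n : ℕ) (hn : 5 ≤ n) (α : ℕ → ℂ) (θ : ℂ)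
    (hleib : ∀ x y z : Fin n → ℂ,
      bracketOf n (F1mul n α θ) (bracketOf n (F1mul n α θ) x y) z =
        bracketOf n (F1mul n α θ) (bracketOf n (F1mul n α θ) x z) y +
        bracketOf n (F1mul n α θ) x (bracketOf n (F1mul n α θ) y z))
    (P : Module.End ℂ (Fin n → ℂ))
    (hP : IsPreDeriv n (bracketOf n (F1mul n α θ)) P)
    (a b : ℕ → ℂ) (ha : P (E n 1) = ∑ t ∈ Icc 1 n, a t • E n t)
    (hb : P (E n 2) = ∑ t ∈ Icc 1 n, b t • E n t) :
    b 1 + b 2 = a 1 + a 2 ∧ (∀ t, 3 ≤ t → t ≤ n - 2 → b t = a t) ∧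
      P (E n 4) = (3 * a 1 + a 2) • E n 4
        + ∑ t ∈ Icc 5 n, (a (t - 2) + 2 * a 2 * α (t - 1)) • E n t := by
  have e11 : bracketOf n (F1mul n α θ) (E n 1) (E n 1) = E n 3 := by
    rw [br_single n _ (by omega) (by omega) (by omega) (by omega), F1_11]
  have e21 : bracketOf n (F1mul n α θ) (E n 2) (E n 1) = E n 3 := by
    rw [br_single n _ (by omega) (by omega) (by omega) (by omega),
      F1_p1 n α θ (by omega) (by omega)]
  have e31 : bracketOf n (F1mul n α θ) (E n 3) (E n 1) = E n 4 := by
    rw [br_single n _ (by omega) (by omega) (by omega) (by omega),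
      F1_p1 n α θ (by omega) (by omega)]
  have h1 := hP (E n 1) (E n 1) (E n 1)
  rw [e11, e31, ha] at h1
  rw [T1_eq n α θ hn a, T2_eq n α θ hn a, T3_eq n α θ hn a] at h1
  have h2 := hP (E n 2) (E n 1) (E n 1)
  rw [e21, e31, ha, hb] at h2
  rw [T1_eq n α θ hn b, T2'_eq n α θ hn a, T3_eq n α θ hn a] at h2
  have key := h1.symm.trans h2
  refine ⟨?_, ?_, ?_⟩
  · have hk := congrFun key ⟨3, by omega⟩
    simp only [Pi.add_apply, Pi.smul_apply, sum_Icc_apply, E_apply, smul_eq_mul,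
      Finset.mem_Icc, Fin.val_mk] at hk
    norm_num at hk
    linear_combination -hk
  · intro t ht1 ht2
    have hk := congrFun key ⟨t + 1, by omega⟩
    simp only [Pi.add_apply, Pi.smul_apply, sum_Icc_apply, E_apply, smul_eq_mul,
      Finset.mem_Icc, Fin.val_mk] at hk
    have hc2 : 5 ≤ t + 1 + 1 ∧ t + 1 + 1 ≤ n := by omega
    have hc1 : ¬(t + 1 + 1 = 4) := by omega
    simp only [if_pos hc2, if_neg hc1] at hk
    rw [show t + 1 + 1 - 2 = t from by omega] at hk
    linear_combination -hk
  · rw [h1]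
    funext k
    simp only [Pi.add_apply, Pi.smul_apply, sum_Icc_apply, E_apply, smul_eq_mul,
      Finset.mem_Icc]
    split_ifs <;> ring
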